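/- Let m ≥ 1 and let 𝒳, 𝒴 ⊆ ℝ^m be linear subspaces satisfying: (a) for every index set I ⊆ {1,…,m} and for both 𝒵 = 𝒳 and 𝒵 = 𝒴, dim(𝒵 + span{e_i : i ∈ I}) = min(dim 𝒵 + |I|, m), where e_i denotes the i-th standard basis vector; and (b) dim 𝒳 + dim 𝒴 ≤ m. Then the set W = {w ∈ ℝ^m : 𝒴 ∩ w𝒳 ≠ {0}} has Lebesgue measure zero, where w𝒳 = {(w_1 x_1, …, w_m x_m) : x ∈ 𝒳} denotes the set of pointwise (coordinatewise) products of w with elements of 𝒳. -/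

import Mathlib

open MeasureTheory MvPolynomial

theorem mvpoly_eval_continuous {n : ℕ} (p : MvPolynomial (Fin n) ℝ) :
    Continuous fun x : Fin n → ℝ => eval x p := by
  induction p using MvPolynomial.induction_on with
  | C a => simpa using continuous_const
  | add p q hp hq => simp only [map_add]; exact hp.add hq
  | mul_X p i hp => simp only [map_mul, eval_X]; exact hp.mul (continuous_apply i)

theorem mvpoly_zero_set_null : ∀ (n : ℕ) (p : MvPolynomial (Fin n) ℝ), p ≠ 0 →
    volume {x : Fin n → ℝ | eval x p = 0} = 0 := by
  intro n
  induction n with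
  | zero =>
    intro p hp
    obtain ⟨a, rfl⟩ := MvPolynomial.C_surjective (Fin 0) p
    have ha : a ≠ 0 := by simpa using hp
    have h : {x : Fin 0 → ℝ | eval x (C a) = 0} = ∅ := by
      ext x; simp [ha]
    rw [h]; exact measure_empty
  | succ n ih =>
    intro p hp
    set q := finSuccEquiv ℝ n p with hq
    have hq0 : q ≠ 0 := by
      simp only [hq, ne_eq, EmbeddingLike.map_eq_zero_iff]
      exact hp
    obtain ⟨k, hk⟩ : ∃ k, q.coeff k ≠ 0 := by
      by_contra h; push_neg at h
      exact hq0 (Polynomial.ext fun k => by simp [h k])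
    have e1 := MeasureTheory.volume_preserving_piFinSuccAbove (fun _ : Fin (n+1) => ℝ) 0
    have e2 : MeasurePreserving (Prod.swap : ℝ × (Fin n → ℝ) → (Fin n → ℝ) × ℝ) volume volume :=
      Measure.measurePreserving_swap
    set e : (Fin (n+1) → ℝ) ≃ᵐ (Fin n → ℝ) × ℝ :=
      (MeasurableEquiv.piFinSuccAbove (fun _ : Fin (n+1) => ℝ) 0).trans MeasurableEquiv.prodComm
      with he
    have hemp : MeasurePreserving e volume volume := e2.comp e1
    have hA : MeasurableSet {x : Fin (n+1) → ℝ | eval x p = 0} :=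
      (isClosed_singleton.preimage (mvpoly_eval_continuous p)).measurableSet
    set S : Set ((Fin n → ℝ) × ℝ) := e.symm ⁻¹' {x : Fin (n+1) → ℝ | eval x p = 0} with hS
    have hSm : MeasurableSet S := e.symm.measurable hA
    have hAS : {x : Fin (n+1) → ℝ | eval x p = 0} = e ⁻¹' S := by
      rw [hS]; ext x; simp
    have hvol : volume {x : Fin (n+1) → ℝ | eval x p = 0} = volume S := by
      rw [hAS]; exact hemp.measure_preimage hSm.nullMeasurableSet
    rw [hvol]
    have hslice : ∀ y : Fin n → ℝ, ∀ t : ℝ,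
        ((y, t) ∈ S ↔ Polynomial.eval t (Polynomial.map (eval y) q) = 0) := by
      intro y t
      have hsymm : e.symm (y, t) = Fin.cons t y := by
        have : e.symm (y, t) = (MeasurableEquiv.piFinSuccAbove (fun _ : Fin (n+1) => ℝ) 0).symm (t, y) := rfl
        rw [this]
        show Fin.insertNthEquiv (fun _ => ℝ) 0 (t, y) = _
        simp [Fin.insertNthEquiv, Fin.insertNth_zero]
      rw [hS]
      simp only [Set.mem_preimage, Set.mem_setOf_eq, hsymm]
      rw [MvPolynomial.eval_eq_eval_mv_eval']
    rw [show (volume : Measure ((Fin n → ℝ) × ℝ)) = (volume : Measure (Fin n → ℝ)).prod volume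
      from rfl] at *
    rw [Measure.measure_prod_null hSm]
    have hN : volume {y : Fin n → ℝ | eval y (q.coeff k) = 0} = 0 := ih _ hk
    have hae : ∀ᵐ y : Fin n → ℝ, eval y (q.coeff k) ≠ 0 := by
      rw [ae_iff]; simpa using hN
    filter_upwards [hae] with y hy
    have hqy : Polynomial.map (eval y) q ≠ 0 := by
      intro h0
      apply hy
      have := congrArg (fun r => Polynomial.coeff r k) h0
      simpa [Polynomial.coeff_map] using this
    have hEq : Prod.mk y ⁻¹' S = {t : ℝ | (Polynomial.map (eval y) q).IsRoot t} := by
      ext t; simpa [Polynomial.IsRoot] using hslice y t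
    simp only [hEq]
    exact Set.Finite.measure_zero (Polynomial.finite_setOf_isRoot hqy) _

lemma generic_coords (m : ℕ) (𝒵 : Submodule ℝ (Fin m → ℝ))
    (ha : ∀ I : Finset (Fin m),
      Module.finrank ℝ
        ↥(𝒵 ⊔ Submodule.span ℝ ((fun i => Pi.single i (1 : ℝ)) '' (I : Set (Fin m))))
        = min (Module.finrank ℝ ↥𝒵 + I.card) m)
    (k : ℕ) (hk : Module.finrank ℝ ↥𝒵 = k) (hkm : k ≤ m)
    (ρ : Fin k → Fin m) (hρ : Function.Injective ρ) :
    ∃ z : Fin k → (Fin m → ℝ), (∀ j, z j ∈ 𝒵) ∧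
      (∀ a j, z j (ρ a) = if a = j then 1 else 0) ∧
      (∀ v ∈ 𝒵, v = ∑ j, v (ρ j) • z j) := by
  classical
  set S : Finset (Fin m) := Finset.image ρ Finset.univ with hSdef
  set I : Finset (Fin m) := Sᶜ with hIdef
  have hScard : S.card = k := by
    rw [hSdef, Finset.card_image_of_injective _ hρ, Finset.card_univ, Fintype.card_fin]
  have hIcard : I.card = m - k := by
    rw [hIdef, Finset.card_compl, hScard, Fintype.card_fin]
  set 𝒮 : Submodule ℝ (Fin m → ℝ) :=
    Submodule.span ℝ ((fun i => Pi.single i (1 : ℝ)) '' (I : Set (Fin m))) with h𝒮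
  have hρS : ∀ a : Fin k, ρ a ∉ I := by
    intro a
    simp only [hIdef, Finset.mem_compl, not_not, hSdef]
    exact Finset.mem_image_of_mem ρ (Finset.mem_univ a)
  have hvan : ∀ v ∈ 𝒮, ∀ i ∉ I, v i = 0 := by
    intro v hv i hi
    have hle : 𝒮 ≤ LinearMap.ker (LinearMap.proj (R := ℝ) (φ := fun _ : Fin m => ℝ) i) := by
      rw [h𝒮, Submodule.span_le]
      rintro g ⟨i', hi', rfl⟩
      simp only [SetLike.mem_coe, LinearMap.mem_ker, LinearMap.proj_apply]
      exact Pi.single_eq_of_ne (by rintro rfl; exact hi hi') 1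
    exact hle hv
  have hmemspan : ∀ f : Fin m → ℝ, (∀ a : Fin k, f (ρ a) = 0) → f ∈ 𝒮 := by
    intro f hf
    have hsub : ∑ i ∈ I, Pi.single i (f i) = ∑ i : Fin m, Pi.single i (f i) :=
      Finset.sum_subset (Finset.subset_univ I) (by
        intro i _ hi
        have hiS : i ∈ S := by
          rw [hIdef, Finset.mem_compl, not_not] at hi; exact hi
        obtain ⟨a, _, rfl⟩ := Finset.mem_image.mp hiS
        rw [hf a, Pi.single_zero])
    have hfeq : f = ∑ i ∈ I, Pi.single i (f i) := by
      rw [hsub, Finset.univ_sum_single]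
    rw [hfeq]
    apply Submodule.sum_mem
    intro i hi
    have hsingle : Pi.single i (f i) = f i • (Pi.single i (1:ℝ) : Fin m → ℝ) := by
      funext j
      simp only [Pi.smul_apply, Pi.single_apply, smul_eq_mul]
      split <;> simp
    rw [hsingle]
    exact Submodule.smul_mem _ _ (Submodule.subset_span ⟨i, hi, rfl⟩)
  have hsup : 𝒵 ⊔ 𝒮 = ⊤ := by
    apply Submodule.eq_top_of_finrank_eq
    rw [ha I, hk, hIcard, Module.finrank_fin_fun]
    omega
  have hinf : 𝒵 ⊓ 𝒮 = ⊥ := by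
    have hdim := Submodule.finrank_sup_add_finrank_inf_eq 𝒵 𝒮
    have h𝒮le : Module.finrank ℝ ↥𝒮 ≤ m - k := by
      have himg : ((fun i => Pi.single i (1 : ℝ)) '' (I : Set (Fin m)))
          = ↑(I.image (fun i => Pi.single i (1:ℝ))) := by
        simp [Finset.coe_image]
      calc Module.finrank ℝ ↥𝒮 ≤ (I.image (fun i => Pi.single i (1:ℝ))).card := by
            rw [h𝒮, himg]; exact finrank_span_finset_le_card _
        _ ≤ I.card := Finset.card_image_le
        _ = m - k := hIcard
    have hsupr : Module.finrank ℝ ↥(𝒵 ⊔ 𝒮) = m := by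
      rw [hsup, finrank_top, Module.finrank_fin_fun]
    apply Submodule.finrank_eq_zero.mp
    have hzk : Module.finrank ℝ ↥𝒵 = k := hk
    omega
  have hz : ∀ j : Fin k, ∃ u ∈ 𝒵, ∃ v ∈ 𝒮, u + v = Pi.single (ρ j) (1:ℝ) := by
    intro j
    have : Pi.single (ρ j) (1:ℝ) ∈ 𝒵 ⊔ 𝒮 := by rw [hsup]; trivial
    exact Submodule.mem_sup.mp this
  choose u hu v hv huv using hz
  have hucoord : ∀ a j, u j (ρ a) = if a = j then 1 else 0 := by
    intro a j
    have h1 : u j (ρ a) + v j (ρ a) = (Pi.single (ρ j) (1:ℝ) : Fin m → ℝ) (ρ a) := by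
      have := congrFun (huv j) (ρ a)
      simpa [Pi.add_apply] using this
    have h2 : v j (ρ a) = 0 := hvan _ (hv j) _ (hρS a)
    have h3 : (Pi.single (ρ j) (1:ℝ) : Fin m → ℝ) (ρ a) = if a = j then 1 else 0 := by
      rcases eq_or_ne a j with h | h
      · subst h; simp
      · rw [Pi.single_eq_of_ne (fun hc => h (hρ hc)), if_neg h]
    rw [h2, add_zero] at h1
    rw [h1, h3]
  refine ⟨u, hu, hucoord, ?_⟩
  intro x hx
  set wd : Fin m → ℝ := x - ∑ j, x (ρ j) • u j with hwd
  have hwz : wd ∈ 𝒵 :=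
    Submodule.sub_mem _ hx (Submodule.sum_mem _ fun j _ => Submodule.smul_mem _ _ (hu j))
  have hwv : ∀ a, wd (ρ a) = 0 := by
    intro a
    have hsum : (∑ j, x (ρ j) • u j) (ρ a) = ∑ j, x (ρ j) * u j (ρ a) := by
      simp [Finset.sum_apply]
    have : wd (ρ a) = x (ρ a) - ∑ j, x (ρ j) * u j (ρ a) := by
      rw [hwd]; simp [hsum]
    rw [this]
    have : ∑ j, x (ρ j) * u j (ρ a) = x (ρ a) := by
      rw [Finset.sum_congr rfl (fun j _ => by rw [hucoord a j])]
      simp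
    rw [this, sub_self]
  have hwmem : wd ∈ 𝒵 ⊓ 𝒮 := ⟨hwz, hmemspan _ hwv⟩
  rw [hinf, Submodule.mem_bot] at hwmem
  have := sub_eq_zero.mp hwmem
  exact this

/-- If two subspaces `𝒳, 𝒴 ⊆ ℝ^m` are generic in the sense that adding spans of standard
basis vectors increases dimension as much as possible, and `dim 𝒳 + dim 𝒴 ≤ m`, then the set
of vectors `w` for which `𝒴` intersects the coordinatewise product `w𝒳` nontrivially is a
Lebesgue null set. -/
theorem generic_subspaces_pointwise_product_null
    (m : ℕ) (hm : 1 ≤ m)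
    (𝒳 𝒴 : Submodule ℝ (Fin m → ℝ))
    (ha : ∀ 𝒵 ∈ ({𝒳, 𝒴} : Set (Submodule ℝ (Fin m → ℝ))), ∀ I : Finset (Fin m),
      Module.finrank ℝ
        ↥(𝒵 ⊔ Submodule.span ℝ ((fun i => Pi.single i (1 : ℝ)) '' (I : Set (Fin m))))
        = min (Module.finrank ℝ ↥𝒵 + I.card) m)
    (hb : Module.finrank ℝ ↥𝒳 + Module.finrank ℝ ↥𝒴 ≤ m) :
    volume {w : Fin m → ℝ | ∃ y ∈ 𝒴, y ≠ 0 ∧ ∃ x ∈ 𝒳, y = w * x} = 0 := by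
  classical
  set d := Module.finrank ℝ ↥𝒳 with hd
  set e := Module.finrank ℝ ↥𝒴 with he
  have hX := ha 𝒳 (Set.mem_insert _ _)
  have hY := ha 𝒴 (Set.mem_insert_of_mem _ rfl)
  have hdm : d ≤ m := le_trans (Nat.le_add_right d e) hb
  have hem : e ≤ m := le_trans (Nat.le_add_left e d) hb
  set σ : Fin d → Fin m := fun j => ⟨(j : ℕ), by omega⟩ with hσ
  set τ : Fin e → Fin m := fun l => ⟨d + (l : ℕ), by omega⟩ with hτ
  have hσinj : Function.Injective σ := by
    intro a b hab
    have : (a : ℕ) = (b : ℕ) := by simpa [hσ, Fin.ext_iff] using hab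
    exact Fin.ext this
  have hτinj : Function.Injective τ := by
    intro a b hab
    have : d + (a : ℕ) = d + (b : ℕ) := by simpa [hτ, Fin.ext_iff] using hab
    exact Fin.ext (by omega)
  obtain ⟨xv, hxvmem, hxvcoord, hxvexp⟩ := generic_coords m 𝒳 hX d hd.symm hdm σ hσinj
  obtain ⟨yv, hyvmem, hyvcoord, hyvexp⟩ := generic_coords m 𝒴 hY e he.symm hem τ hτinj
  set r : Fin d ⊕ Fin e → Fin m := Sum.elim σ τ with hr
  set M : Matrix (Fin d ⊕ Fin e) (Fin d ⊕ Fin e) (MvPolynomial (Fin m) ℝ) :=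
    fun i j => Sum.elim (fun a => X (r i) * C (xv a (r i))) (fun b => C (yv b (r i))) j with hM
  set p : MvPolynomial (Fin m) ℝ := M.det with hp
  set w0 : Fin m → ℝ := fun i => if (i : ℕ) < d then (1:ℝ) else 0 with hw0def
  have hw0 : eval w0 p = 1 := by
    have hmd := RingHom.map_det (eval w0) M
    rw [hp, hmd, RingHom.mapMatrix_apply]
    have hMB : M.map (eval w0) =
        Matrix.fromBlocks 1 (Matrix.of fun a b => yv b (σ a)) 0 1 := by
      ext i j
      rcases i with a | b <;> rcases j with a' | b'
      · have h1 : w0 (σ a) = 1 := by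
          simp only [hw0def, hσ]; exact if_pos a.isLt
        rw [Matrix.map_apply]
        simp only [Matrix.map_apply, hM, hr, Sum.elim_inl, Matrix.fromBlocks_apply₁₁]
        rw [map_mul, eval_X, eval_C, h1, one_mul, hxvcoord a a', Matrix.one_apply]
      · rw [Matrix.map_apply]
        simp only [Matrix.map_apply, hM, hr, Sum.elim_inl, Sum.elim_inr,
          Matrix.fromBlocks_apply₁₂, Matrix.of_apply]
        rw [eval_C]
      · have h0 : w0 (τ b) = 0 := by
          simp only [hw0def, hτ]
          exact if_neg (by omega)
        rw [Matrix.map_apply]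
        simp only [Matrix.map_apply, hM, hr, Sum.elim_inl, Sum.elim_inr,
          Matrix.fromBlocks_apply₂₁, Matrix.zero_apply]
        rw [map_mul, eval_X, eval_C, h0, zero_mul]
      · rw [Matrix.map_apply]
        simp only [Matrix.map_apply, hM, hr, Sum.elim_inr, Matrix.fromBlocks_apply₂₂]
        rw [eval_C, hyvcoord b b', Matrix.one_apply]
    rw [hMB, Matrix.det_fromBlocks_zero₂₁]
    simp
  have hpne : p ≠ 0 := by
    intro h
    rw [h] at hw0
    simp at hw0
  refine measure_mono_null ?_ (mvpoly_zero_set_null m p hpne)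
  rintro w ⟨y, hy𝒴, hyne, x, hx𝒳, hyx⟩
  simp only [Set.mem_setOf_eq]
  set v : Fin d ⊕ Fin e → ℝ := Sum.elim (fun j => x (σ j)) (fun l => -(y (τ l))) with hv
  have hvne : v ≠ 0 := by
    intro h0
    apply hyne
    have hc : ∀ l, y (τ l) = 0 := by
      intro l
      have := congrFun h0 (Sum.inr l)
      simpa [hv] using this
    rw [hyvexp y hy𝒴]
    simp [hc]
  have hker : (M.map (eval w)).mulVec v = 0 := by
    funext i
    have hxi : x (r i) = ∑ j, x (σ j) * xv j (r i) := by
      have h := congrFun (hxvexp x hx𝒳) (r i)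
      simpa [Finset.sum_apply] using h
    have hyi : y (r i) = ∑ l, y (τ l) * yv l (r i) := by
      have h := congrFun (hyvexp y hy𝒴) (r i)
      simpa [Finset.sum_apply] using h
    have hwxy : y (r i) = w (r i) * x (r i) := by rw [hyx]; rfl
    show ∑ j, (M.map (eval w)) i j * v j = 0
    rw [Fintype.sum_sum_type]
    have h1 : ∀ a : Fin d, (M.map (eval w)) i (Sum.inl a) * v (Sum.inl a)
        = w (r i) * (x (σ a) * xv a (r i)) := by
      intro a
      rw [Matrix.map_apply]
      simp [hM, Matrix.map_apply, hv]
      ring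
    have h2 : ∀ b : Fin e, (M.map (eval w)) i (Sum.inr b) * v (Sum.inr b)
        = -(y (τ b) * yv b (r i)) := by
      intro b
      rw [Matrix.map_apply]
      simp [hM, Matrix.map_apply, hv]
      ring
    simp only [h1, h2]
    rw [← Finset.mul_sum, ← hxi, Finset.sum_neg_distrib, ← hyi, ← hwxy]
    exact add_neg_cancel _
  have hdet0 : (M.map (eval w)).det = 0 :=
    Matrix.exists_mulVec_eq_zero_iff.mp ⟨v, hvne, hker⟩
  rw [hp, RingHom.map_det, RingHom.mapMatrix_apply]
  exact hdet0
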